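/- arXiv:2302.07810 — 2 statements merged into one kernel-verified Lean document; each statement's English description precedes it below -/
import Mathlib

section
/- (Fox, one direction) If C is a symmetric monoidal category equipped with natural transformations δ_A : A → A ⊗ A and ε_A : A → 1 making every object a cocommutative comonoid, such that δ and ε are monoidal natural transformations (δ_{A⊗B} is the collated tensor comultiplication and ε_{A⊗B} = ε_A ⊗ ε_B up to unitor, with δ_1 and ε_1 the coherence isomorphisms), then the monoidal unit 1 is a terminal object of C. -/
open CategoryTheory CategoryTheory.Limits MonoidalCategory

/-- The canonical middle-swap morphism built from associators and the braiding. -/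
def middleSwap {C : Type*} [Category C] [MonoidalCategory C] [SymmetricCategory C]
    (A B : C) : (A ⊗ A) ⊗ (B ⊗ B) ⟶ (A ⊗ B) ⊗ (A ⊗ B) :=
  (α_ A A (B ⊗ B)).hom ≫ (𝟙 A ⊗ₘ (α_ A B B).inv) ≫
    (𝟙 A ⊗ₘ ((β_ A B).hom ⊗ₘ 𝟙 B)) ≫ (𝟙 A ⊗ₘ (α_ B A B).hom) ≫ (α_ A B (A ⊗ B)).inv

/-- (Fox, one direction) If a symmetric monoidal category is equipped with natural
transformations `δ` and `ε` making every object a cocommutative comonoid, compatibly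
with the monoidal structure, then the monoidal unit is terminal. -/
theorem stmt_11 {C : Type*} [Category C] [MonoidalCategory C] [SymmetricCategory C]
    (δ : ∀ A : C, A ⟶ A ⊗ A) (ε : ∀ A : C, A ⟶ 𝟙_ C)
    (δ_nat : ∀ {A B : C} (f : A ⟶ B), f ≫ δ B = δ A ≫ (f ⊗ₘ f))
    (ε_nat : ∀ {A B : C} (f : A ⟶ B), f ≫ ε B = ε A)
    (coassoc : ∀ A : C, δ A ≫ (δ A ⊗ₘ 𝟙 A) ≫ (α_ A A A).hom = δ A ≫ (𝟙 A ⊗ₘ δ A))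
    (counit_left : ∀ A : C, δ A ≫ (ε A ⊗ₘ 𝟙 A) ≫ (λ_ A).hom = 𝟙 A)
    (counit_right : ∀ A : C, δ A ≫ (𝟙 A ⊗ₘ ε A) ≫ (ρ_ A).hom = 𝟙 A)
    (cocomm : ∀ A : C, δ A ≫ (β_ A A).hom = δ A)
    (δ_tensor : ∀ A B : C, δ (A ⊗ B) = (δ A ⊗ₘ δ B) ≫ middleSwap A B)
    (ε_tensor : ∀ A B : C, ε (A ⊗ B) = (ε A ⊗ₘ ε B) ≫ (λ_ (𝟙_ C)).hom)
    (δ_unit : δ (𝟙_ C) = (λ_ (𝟙_ C)).inv)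
    (ε_unit : ε (𝟙_ C) = 𝟙 (𝟙_ C)) :
    Nonempty (IsTerminal (𝟙_ C)) := by
  exact ⟨IsTerminal.ofUniqueHom (fun A => ε A) (fun A f => by
    have h := ε_nat f
    rwa [ε_unit, Category.comp_id] at h)⟩
end

section
/- (Fox, products direction) Under the hypotheses of Fox's theorem, for all objects A, B the tensor product A ⊗ B, with projections p₁ = (1_A ⊗ ε_B) ∘ (unitor) and p₂ = (ε_A ⊗ 1_B) ∘ (unitor), is a categorical product of A and B: for any f : X → A and g : X → B the morphism (f ⊗ g) ∘ δ_X : X → A ⊗ B is the unique morphism whose composites with p₁, p₂ are f and g respectively. -/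
open CategoryTheory CategoryTheory.Limits MonoidalCategory

lemma swap_eps_aux {C : Type*} [Category C] [MonoidalCategory C] [SymmetricCategory C]
    {A B : C} (εA : A ⟶ 𝟙_ C) (εB : B ⟶ 𝟙_ C) :
    middleSwap A B ≫ (((𝟙 A ⊗ₘ εB) ≫ (ρ_ A).hom) ⊗ₘ ((εA ⊗ₘ 𝟙 B) ≫ (λ_ B).hom))
      = ((𝟙 A ⊗ₘ εA) ⊗ₘ (εB ⊗ₘ 𝟙 B)) ≫ ((ρ_ A).hom ⊗ₘ (λ_ B).hom) := by
  have inner : (α_ A B B).inv ≫ ((β_ A B).hom ⊗ₘ 𝟙 B) ≫ (α_ B A B).hom ≫ (εB ⊗ₘ (εA ⊗ₘ 𝟙 B))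
      = (εA ⊗ₘ (εB ⊗ₘ 𝟙 B)) ≫ (α_ (𝟙_ C) (𝟙_ C) B).inv ≫
        ((β_ (𝟙_ C) (𝟙_ C)).hom ⊗ₘ 𝟙 B) ≫ (α_ (𝟙_ C) (𝟙_ C) B).hom := by
    rw [← MonoidalCategory.associator_naturality (εB) (εA) (𝟙 B)]
    slice_lhs 2 3 => rw [← MonoidalCategory.comp_tensor_id,
      ← BraidedCategory.braiding_naturality εA εB, MonoidalCategory.comp_tensor_id]
    slice_lhs 1 2 => rw [← MonoidalCategory.associator_inv_naturality εA εB (𝟙 B)]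
    simp only [Category.assoc]
  rw [← MonoidalCategory.tensorHom_comp_tensorHom, middleSwap]
  simp only [Category.assoc]
  slice_lhs 5 6 => rw [← MonoidalCategory.associator_inv_naturality (𝟙 A) εB (εA ⊗ₘ 𝟙 B)]
  slice_lhs 2 5 => rw [← MonoidalCategory.id_tensor_comp, ← MonoidalCategory.id_tensor_comp,
    ← MonoidalCategory.id_tensor_comp]
  rw [inner, MonoidalCategory.id_tensor_comp]
  simp only [Category.assoc]
  rw [← MonoidalCategory.associator_naturality_assoc (𝟙 A) εA (εB ⊗ₘ 𝟙 B)]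
  congr 1
  have hβ : (β_ (𝟙_ C) (𝟙_ C)).hom = 𝟙 _ := by simp [← MonoidalCategory.unitors_equal]
  rw [hβ]
  coherence

/-- (Fox, products direction) Under the Fox hypotheses, `A ⊗ B` with the counit-induced
projections is a categorical product of `A` and `B`, with pairing `δ X ≫ (f ⊗ g)`. -/
theorem stmt_13 {C : Type*} [Category C] [MonoidalCategory C] [SymmetricCategory C]
    (δ : ∀ A : C, A ⟶ A ⊗ A) (ε : ∀ A : C, A ⟶ 𝟙_ C)
    (δ_nat : ∀ {A B : C} (f : A ⟶ B), f ≫ δ B = δ A ≫ (f ⊗ₘ f))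
    (ε_nat : ∀ {A B : C} (f : A ⟶ B), f ≫ ε B = ε A)
    (coassoc : ∀ A : C, δ A ≫ (δ A ⊗ₘ 𝟙 A) ≫ (α_ A A A).hom = δ A ≫ (𝟙 A ⊗ₘ δ A))
    (counit_left : ∀ A : C, δ A ≫ (ε A ⊗ₘ 𝟙 A) ≫ (λ_ A).hom = 𝟙 A)
    (counit_right : ∀ A : C, δ A ≫ (𝟙 A ⊗ₘ ε A) ≫ (ρ_ A).hom = 𝟙 A)
    (cocomm : ∀ A : C, δ A ≫ (β_ A A).hom = δ A)
    (δ_tensor : ∀ A B : C, δ (A ⊗ B) = (δ A ⊗ₘ δ B) ≫ middleSwap A B)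
    (ε_tensor : ∀ A B : C, ε (A ⊗ B) = (ε A ⊗ₘ ε B) ≫ (λ_ (𝟙_ C)).hom)
    (δ_unit : δ (𝟙_ C) = (λ_ (𝟙_ C)).inv)
    (ε_unit : ε (𝟙_ C) = 𝟙 (𝟙_ C))
    (A B X : C) (f : X ⟶ A) (g : X ⟶ B) :
    let p₁ : A ⊗ B ⟶ A := (𝟙 A ⊗ₘ ε B) ≫ (ρ_ A).hom
    let p₂ : A ⊗ B ⟶ B := (ε A ⊗ₘ 𝟙 B) ≫ (λ_ B).hom
    (δ X ≫ (f ⊗ₘ g)) ≫ p₁ = f ∧ (δ X ≫ (f ⊗ₘ g)) ≫ p₂ = g ∧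
    ∀ h : X ⟶ A ⊗ B, h ≫ p₁ = f → h ≫ p₂ = g → h = δ X ≫ (f ⊗ₘ g) := by
  intro p₁ p₂
  have h1 : (δ X ≫ (f ⊗ₘ g)) ≫ p₁ = f := by
    show (δ X ≫ (f ⊗ₘ g)) ≫ (𝟙 A ⊗ₘ ε B) ≫ (ρ_ A).hom = f
    have step : (f ⊗ₘ g) ≫ (𝟙 A ⊗ₘ ε B) = (𝟙 X ⊗ₘ ε X) ≫ (f ⊗ₘ 𝟙 (𝟙_ C)) := by
      rw [MonoidalCategory.tensorHom_comp_tensorHom, MonoidalCategory.tensorHom_comp_tensorHom,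
        Category.comp_id, Category.id_comp, Category.comp_id, ε_nat g]
    simp only [Category.assoc]
    rw [← Category.assoc (f ⊗ₘ g), step, Category.assoc, MonoidalCategory.tensorHom_id,
      MonoidalCategory.rightUnitor_naturality]
    rw [reassoc_of% counit_right X]
  have h2 : (δ X ≫ (f ⊗ₘ g)) ≫ p₂ = g := by
    show (δ X ≫ (f ⊗ₘ g)) ≫ (ε A ⊗ₘ 𝟙 B) ≫ (λ_ B).hom = g
    have step : (f ⊗ₘ g) ≫ (ε A ⊗ₘ 𝟙 B) = (ε X ⊗ₘ 𝟙 X) ≫ (𝟙 (𝟙_ C) ⊗ₘ g) := by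
      rw [MonoidalCategory.tensorHom_comp_tensorHom, MonoidalCategory.tensorHom_comp_tensorHom,
        Category.comp_id, Category.id_comp, Category.comp_id, ε_nat f]
    simp only [Category.assoc]
    rw [← Category.assoc (f ⊗ₘ g), step, Category.assoc, MonoidalCategory.id_tensorHom,
      MonoidalCategory.leftUnitor_naturality]
    rw [reassoc_of% counit_left X]
  refine ⟨h1, h2, ?_⟩
  intro h hp1 hp2
  have key : δ (A ⊗ B) ≫ (p₁ ⊗ₘ p₂) = 𝟙 (A ⊗ B) := by
    rw [δ_tensor, Category.assoc]
    show (δ A ⊗ₘ δ B) ≫ middleSwap A B ≫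
      (((𝟙 A ⊗ₘ ε B) ≫ (ρ_ A).hom) ⊗ₘ ((ε A ⊗ₘ 𝟙 B) ≫ (λ_ B).hom)) = 𝟙 (A ⊗ B)
    rw [swap_eps_aux, ← Category.assoc, MonoidalCategory.tensorHom_comp_tensorHom,
      MonoidalCategory.tensorHom_comp_tensorHom]
    simp only [Category.assoc]
    rw [counit_right A, counit_left B, MonoidalCategory.id_tensorHom_id]
  calc h = h ≫ δ (A ⊗ B) ≫ (p₁ ⊗ₘ p₂) := by rw [key, Category.comp_id]
    _ = δ X ≫ (h ⊗ₘ h) ≫ (p₁ ⊗ₘ p₂) := by rw [← Category.assoc, δ_nat h, Category.assoc]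
    _ = δ X ≫ ((h ≫ p₁) ⊗ₘ (h ≫ p₂)) := by rw [MonoidalCategory.tensorHom_comp_tensorHom]
    _ = δ X ≫ (f ⊗ₘ g) := by rw [hp1, hp2]
end
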